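/- For the root system Φ = A_{n−1} and positive integers m, n with 0 ≤ i ≤ n−1, the numbers h⁺ᵢ(A_{n−1}, m) = (1/(i+1))·C(n−1, i)·C(mn−2, i) satisfy Σᵢ h⁺ᵢ(A_{n−1}, m) = ∏_{j=1}^{n−1} (e_j + mn − 1)/(e_j + 1), where e_j = j are the exponents of A_{n−1}; equivalently, Σ_{i=0}^{n−1} (1/(i+1))·C(n−1,i)·C(mn−2,i) = (1/n)·C((m+1)n − 2, n − 1). -/

import Mathlib

open Finset

/-- Vandermonde-type sum: `∑ i, C(n,i+1) C(N,i) = C(n+N, N+1)`. -/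
lemma vand_aux (n N : ℕ) :
    ∑ i ∈ range n, n.choose (i + 1) * N.choose i = (n + N).choose (N + 1) := by
  have h1 : ∑ i ∈ range n, n.choose (i + 1) * N.choose i
      = ∑ i ∈ range (max n (N + 1)), n.choose (i + 1) * N.choose i := by
    apply Finset.sum_subset
    · exact Finset.range_subset_range.2 (le_max_left _ _)
    · intro i _ hi
      have : n < i + 1 := by simpa using Nat.lt_succ_of_le (le_of_not_gt (by simpa using hi))
      rw [Nat.choose_eq_zero_of_lt this, zero_mul]
  have h2 : ∑ i ∈ range (N + 1), n.choose (i + 1) * N.choose i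
      = ∑ i ∈ range (max n (N + 1)), n.choose (i + 1) * N.choose i := by
    apply Finset.sum_subset
    · exact Finset.range_subset_range.2 (le_max_right _ _)
    · intro i _ hi
      have : N < i := by simpa using hi
      rw [Nat.choose_eq_zero_of_lt this, mul_zero]
  rw [h1, ← h2]
  have h3 : (n + N).choose (N + 1)
      = ∑ ij ∈ (Finset.HasAntidiagonal.antidiagonal (N + 1) : Finset (ℕ × ℕ)), n.choose ij.1 * N.choose ij.2 :=
    Nat.add_choose_eq n N (N + 1)
  rw [h3, Finset.Nat.sum_antidiagonal_eq_sum_range_succ (fun p q => n.choose p * N.choose q)]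
  rw [Finset.sum_range_succ' (fun p => n.choose p * N.choose (N + 1 - p))]
  simp only [Nat.sub_zero, Nat.choose_succ_self, Nat.choose_zero_right, mul_zero, add_zero]
  apply Finset.sum_congr rfl
  intro i hi
  have hi' : i ≤ N := Nat.lt_succ_iff.mp (Finset.mem_range.mp hi)
  congr 1
  rw [Nat.succ_sub_succ]
  exact (Nat.choose_symm hi').symm

/-- Product form equals `(1/(t+1)) C(K+t-1, t)` for `K ≥ 1`. -/
lemma prod_aux (K : ℕ) (hK : 1 ≤ K) (t : ℕ) :
    ∏ j ∈ Finset.Icc 1 t, ((j : ℚ) + K - 1) / ((j : ℚ) + 1)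
      = (1 / (t + 1 : ℚ)) * ((K + t - 1).choose t : ℚ) := by
  induction t with
  | zero => simp
  | succ t ih =>
    rw [Finset.prod_Icc_succ_top (by omega), ih]
    have hchoose : (K + t) * (K + t - 1).choose t = (K + t).choose (t + 1) * (t + 1) := by
      have := Nat.add_one_mul_choose_eq (K + t - 1) t
      rwa [Nat.sub_add_cancel (by omega)] at this
    have hq : ((K + t : ℕ) : ℚ) * ((K + t - 1).choose t : ℚ)
        = ((K + t).choose (t + 1) : ℚ) * ((t : ℚ) + 1) := by
      exact_mod_cast congrArg (Nat.cast : ℕ → ℚ) hchoose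
    have h1 : ((t : ℚ) + 1) ≠ 0 := by positivity
    have h2 : ((t : ℚ) + 1 + 1) ≠ 0 := by positivity
    have hnum : ((t + 1 : ℕ) : ℚ) + K - 1 = ((K + t : ℕ) : ℚ) := by push_cast; ring
    have hidx : K + (t + 1) - 1 = K + t := by omega
    rw [hidx, hnum]
    push_cast at hq ⊢
    field_simp
    linear_combination hq

theorem hplus_sum_typeA (m n : ℕ) (hm : 1 ≤ m) (hn : 2 ≤ n) :
    (∑ i ∈ Finset.range n,
        (1 / (i + 1 : ℚ)) * ((n - 1).choose i : ℚ) * ((m * n - 2).choose i : ℚ))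
        = ∏ j ∈ Finset.Icc 1 (n - 1), ((j : ℚ) + m * n - 1) / ((j : ℚ) + 1) ∧
    (∑ i ∈ Finset.range n,
        (1 / (i + 1 : ℚ)) * ((n - 1).choose i : ℚ) * ((m * n - 2).choose i : ℚ))
        = (1 / (n : ℚ)) * (((m + 1) * n - 2).choose (n - 1) : ℚ) := by
  have hmn : 2 ≤ m * n := le_trans hn (Nat.le_mul_of_pos_left n hm)
  set N := m * n - 2 with hN
  have hnq : (n : ℚ) ≠ 0 := by positivity
  -- the sum equals (1/n) * C(n+N, N+1)
  have key : (∑ i ∈ Finset.range n,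
      (1 / (i + 1 : ℚ)) * ((n - 1).choose i : ℚ) * ((m * n - 2).choose i : ℚ))
      = (1 / (n : ℚ)) * (((n + N).choose (N + 1) : ℚ)) := by
    rw [← vand_aux n N]
    push_cast
    rw [Finset.mul_sum]
    apply Finset.sum_congr rfl
    intro i _
    have h : n * (n - 1).choose i = n.choose (i + 1) * (i + 1) := by
      have := Nat.add_one_mul_choose_eq (n - 1) i
      rwa [Nat.sub_add_cancel (by omega)] at this
    have hq : (n : ℚ) * ((n - 1).choose i : ℚ) = (n.choose (i + 1) : ℚ) * ((i : ℚ) + 1) := by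
      exact_mod_cast congrArg (Nat.cast : ℕ → ℚ) h
    have hi1 : ((i : ℚ) + 1) ≠ 0 := by positivity
    field_simp
    nlinarith [hq]
  have hmul : (m + 1) * n = m * n + n := by ring
  have hsym : (n + N).choose (N + 1) = ((m + 1) * n - 2).choose (n - 1) := by
    have h1 : n + N = (m + 1) * n - 2 := by omega
    have h2 : (m + 1) * n - 2 - (N + 1) = n - 1 := by omega
    rw [h1, ← h2, Nat.choose_symm (by omega)]
  have key2 : (∑ i ∈ Finset.range n,
      (1 / (i + 1 : ℚ)) * ((n - 1).choose i : ℚ) * ((m * n - 2).choose i : ℚ))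
      = (1 / (n : ℚ)) * (((m + 1) * n - 2).choose (n - 1) : ℚ) := by
    rw [key, hsym]
  refine ⟨?_, key2⟩
  rw [key2]
  have hp := prod_aux (m * n) (by omega) (n - 1)
  have ht1 : ((n - 1 : ℕ) : ℚ) + 1 = (n : ℚ) := by
    have : (n - 1 : ℕ) + 1 = n := by omega
    exact_mod_cast congrArg (Nat.cast : ℕ → ℚ) this
  have hidx : m * n + (n - 1) - 1 = (m + 1) * n - 2 := by
    have hmul : (m + 1) * n = m * n + n := by ring
    omega
  rw [hidx, ht1] at hp
  rw [← hp]
  apply Finset.prod_congr rfl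
  intro j _
  push_cast
  ring_nf
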